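/- Let n ≥ 1, N ≥ 1, and let σ_0, …, σ_n be real numbers. Let A be the N × N symmetric n-banded Toeplitz matrix with entries A_{ij} = σ_{|i−j|} for |i − j| ≤ n and A_{ij} = 0 otherwise, and let Φ(t) = σ_0 + 2 ∑_{k=1}^{n} σ_k cos(kt). Then for every z ∈ ℝ^N one has (min_{t∈ℝ} Φ(t)) |z|² ≤ ⟨Az, z⟩ ≤ (max_{t∈ℝ} Φ(t)) |z|²; in particular all eigenvalues of A lie in the interval [min Φ, max Φ]. -/
import Mathlib
open Real intervalIntegral Finset


lemma int_cos_mul_aux {c : ℝ} (hc : c ≠ 0) (a b : ℝ) :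
    ∫ t in a..b, Real.cos (c*t) = (Real.sin (c*b) - Real.sin (c*a))/c := by
  rw [intervalIntegral.integral_comp_mul_left Real.cos hc, integral_cos]
  simp [smul_eq_mul]; ring

lemma cos_int_integral_aux (a : ℤ) :
    ∫ t in (0:ℝ)..(2*Real.pi), Real.cos (a * t) = if a = 0 then 2*Real.pi else 0 := by
  rcases eq_or_ne a 0 with h | h
  · simp [h]
  · have hc : (a:ℝ) ≠ 0 := Int.cast_ne_zero.mpr h
    rw [int_cos_mul_aux hc, if_neg h]
    have : Real.sin ((a:ℝ) * (2*Real.pi)) = 0 := by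
      have := Real.sin_int_mul_pi (2*a)
      push_cast at this ⊢
      rw [show (a:ℝ) * (2*Real.pi) = (2*a:ℝ)*Real.pi by ring]
      exact this
    simp [this]

lemma phi_cos_integral_aux (n : ℕ) (σ : ℕ → ℝ) (d : ℤ) :
    ∫ t in (0:ℝ)..(2*Real.pi),
      (σ 0 + 2*∑ k ∈ Finset.Icc 1 n, σ k * Real.cos (k*t)) * Real.cos (d*t)
    = 2*Real.pi * (if d.natAbs ≤ n then σ d.natAbs else 0) := by
  have hptw : ∀ t : ℝ,
      (σ 0 + 2*∑ k ∈ Finset.Icc 1 n, σ k * Real.cos (k*t)) * Real.cos (d*t)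
      = σ 0 * Real.cos (d*t)
        + ∑ k ∈ Finset.Icc 1 n,
            σ k * (Real.cos ((((k:ℤ)+d : ℤ):ℝ)*t) + Real.cos ((((k:ℤ)-d : ℤ):ℝ)*t)) := by
    intro t
    rw [add_mul, mul_assoc, Finset.sum_mul]
    congr 1
    rw [Finset.mul_sum]
    refine Finset.sum_congr rfl fun k _ => ?_
    have h1 : Real.cos ((((k:ℤ)+d : ℤ):ℝ)*t) = Real.cos ((k:ℝ)*t + (d:ℝ)*t) := by
      push_cast; ring_nf
    have h2 : Real.cos ((((k:ℤ)-d : ℤ):ℝ)*t) = Real.cos ((k:ℝ)*t - (d:ℝ)*t) := by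
      push_cast; ring_nf
    rw [h1, h2, Real.cos_add, Real.cos_sub]
    ring
  simp only [hptw]
  rw [intervalIntegral.integral_add]
  · rw [intervalIntegral.integral_const_mul, intervalIntegral.integral_finset_sum]
    · simp only [intervalIntegral.integral_const_mul]
      have : ∀ k ∈ Finset.Icc 1 n,
          σ k * ∫ t in (0:ℝ)..(2*Real.pi),
            (Real.cos ((((k:ℤ)+d : ℤ):ℝ)*t) + Real.cos ((((k:ℤ)-d : ℤ):ℝ)*t))
          = σ k * ((if (k:ℤ)+d = 0 then 2*Real.pi else 0)
                 + (if (k:ℤ)-d = 0 then 2*Real.pi else 0)) := by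
        intro k _
        rw [intervalIntegral.integral_add]
        · rw [cos_int_integral_aux, cos_int_integral_aux]
        · exact (Real.continuous_cos.comp (continuous_const.mul continuous_id)).intervalIntegrable _ _
        · exact (Real.continuous_cos.comp (continuous_const.mul continuous_id)).intervalIntegrable _ _
      rw [Finset.sum_congr rfl this, cos_int_integral_aux]
      rcases eq_or_ne d 0 with hd | hd
      · subst hd
        have : ∀ k ∈ Finset.Icc 1 n,
            σ k * ((if (k:ℤ)+0 = 0 then 2*Real.pi else 0)
                 + (if (k:ℤ)-0 = 0 then 2*Real.pi else 0)) = 0 := by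
          intro k hk
          have hk1 := (Finset.mem_Icc.mp hk).1
          have h1 : ¬ ((k:ℤ) + 0 = 0) := by omega
          have h2 : ¬ ((k:ℤ) - 0 = 0) := by omega
          rw [if_neg h1, if_neg h2]; ring
        rw [Finset.sum_congr rfl this, Finset.sum_const_zero]
        simp
        ring
      · rw [if_neg hd]
        have key : ∑ k ∈ Finset.Icc 1 n,
            σ k * ((if (k:ℤ)+d = 0 then 2*Real.pi else 0)
                 + (if (k:ℤ)-d = 0 then 2*Real.pi else 0))
            = if d.natAbs ≤ n then σ d.natAbs * (2*Real.pi) else 0 := by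
          by_cases hdn : d.natAbs ≤ n
          · rw [if_pos hdn]
            have hmem : d.natAbs ∈ Finset.Icc 1 n := by
              rw [Finset.mem_Icc]
              constructor
              · omega
              · exact hdn
            rw [Finset.sum_eq_single_of_mem d.natAbs hmem]
            · rcases Int.natAbs_eq d with h | h
              · have h1 : ¬ ((d.natAbs:ℤ) + d = 0) := by omega
                have h2 : (d.natAbs:ℤ) - d = 0 := by omega
                rw [if_neg h1, if_pos h2]; ring
              · have h1 : (d.natAbs:ℤ) + d = 0 := by omega
                have h2 : ¬ ((d.natAbs:ℤ) - d = 0) := by omega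
                rw [if_pos h1, if_neg h2]; ring
            · intro k _ hk
              have h1 : ¬ ((k:ℤ) + d = 0) := by omega
              have h2 : ¬ ((k:ℤ) - d = 0) := by omega
              rw [if_neg h1, if_neg h2]; ring
          · rw [if_neg hdn]
            apply Finset.sum_eq_zero
            intro k hk
            have hk' := Finset.mem_Icc.mp hk
            have h1 : ¬ ((k:ℤ) + d = 0) := by omega
            have h2 : ¬ ((k:ℤ) - d = 0) := by omega
            rw [if_neg h1, if_neg h2]; ring
        rw [key]
        split <;> ring
    · intro k _
      apply Continuous.intervalIntegrable
      fun_prop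
  · apply Continuous.intervalIntegrable
    fun_prop
  · apply Continuous.intervalIntegrable
    apply continuous_finset_sum
    intro k _
    fun_prop


theorem toeplitz_banded_eigenvalue_bounds (n : ℕ) (hn : 1 ≤ n) (N : ℕ) (hN : 1 ≤ N)
    (σ : ℕ → ℝ)
    (A : Matrix (Fin N) (Fin N) ℝ)
    (hA : ∀ i j : Fin N,
      A i j = if ((i : ℤ) - (j : ℤ)).natAbs ≤ n then σ ((i : ℤ) - (j : ℤ)).natAbs else 0)
    (m M : ℝ)
    (hm : IsLeast (Set.range fun t : ℝ =>
      σ 0 + 2 * ∑ k ∈ Finset.Icc 1 n, σ k * Real.cos (k * t)) m)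
    (hM : IsGreatest (Set.range fun t : ℝ =>
      σ 0 + 2 * ∑ k ∈ Finset.Icc 1 n, σ k * Real.cos (k * t)) M) :
    (∀ z : Fin N → ℝ,
      m * ∑ i, (z i) ^ 2 ≤ ∑ i, A.mulVec z i * z i ∧
        ∑ i, A.mulVec z i * z i ≤ M * ∑ i, (z i) ^ 2) ∧
    (∀ (μ : ℝ) (z : Fin N → ℝ), z ≠ 0 → A.mulVec z = μ • z → m ≤ μ ∧ μ ≤ M) := by
  set Φ : ℝ → ℝ := fun t => σ 0 + 2 * ∑ k ∈ Finset.Icc 1 n, σ k * Real.cos (k * t) with hΦdef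
  have hΦc : Continuous Φ := by
    apply continuous_const.add
    apply continuous_const.mul
    exact continuous_finset_sum _ fun k _ => by fun_prop
  have h2π : (0:ℝ) < 2 * Real.pi := by positivity
  -- integral of Φ against cos(d t)
  have phi_cos_integral : ∀ d : ℤ,
      ∫ t in (0:ℝ)..(2*Real.pi), Φ t * Real.cos (d*t)
      = 2*Real.pi * (if d.natAbs ≤ n then σ d.natAbs else 0) :=
    fun d => phi_cos_integral_aux n σ d
  have main : ∀ z : Fin N → ℝ,
      m * ∑ i, (z i) ^ 2 ≤ ∑ i, A.mulVec z i * z i ∧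
        ∑ i, A.mulVec z i * z i ≤ M * ∑ i, (z i) ^ 2 := by
    intro z
    set f : ℝ → ℝ := fun t =>
      (∑ j, z j * Real.cos ((j:ℕ) * t))^2 + (∑ j, z j * Real.sin ((j:ℕ) * t))^2 with hfdef
    have hfc : Continuous f := by
      apply Continuous.add
      · exact (continuous_finset_sum _ fun j _ => by fun_prop).pow 2
      · exact (continuous_finset_sum _ fun j _ => by fun_prop).pow 2
    have hf0 : ∀ t, 0 ≤ f t := fun t => by
      simp only [hfdef]; positivity
    have hexp : ∀ t, f t
        = ∑ p : Fin N × Fin N,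
            z p.1 * z p.2 * Real.cos ((((p.1:ℤ) - (p.2:ℤ) : ℤ):ℝ) * t) := by
      intro t
      rw [Fintype.sum_prod_type]
      simp only [hfdef]
      rw [sq, sq, Finset.sum_mul_sum, Finset.sum_mul_sum, ← Finset.sum_add_distrib]
      refine Finset.sum_congr rfl fun j _ => ?_
      rw [← Finset.sum_add_distrib]
      refine Finset.sum_congr rfl fun l _ => ?_
      have : ((((j:ℤ) - (l:ℤ) : ℤ)):ℝ) * t = (j:ℕ) * t - (l:ℕ) * t := by push_cast; ring
      rw [this, Real.cos_sub]
      ring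
    -- integral of f
    have hint_f : ∫ t in (0:ℝ)..(2*Real.pi), f t = 2*Real.pi * ∑ i, (z i)^2 := by
      rw [intervalIntegral.integral_congr (g := fun t =>
        ∑ p : Fin N × Fin N, z p.1 * z p.2 * Real.cos ((((p.1:ℤ) - (p.2:ℤ) : ℤ):ℝ) * t))
        (fun t _ => hexp t)]
      rw [intervalIntegral.integral_finset_sum (μ := MeasureTheory.volume)
        (a := (0:ℝ)) (b := 2*Real.pi) (s := (Finset.univ : Finset (Fin N × Fin N)))
        (f := fun p t => z p.1 * z p.2 * Real.cos ((((p.1:ℤ) - (p.2:ℤ) : ℤ):ℝ) * t))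
        (fun p _ => Continuous.intervalIntegrable (by fun_prop) _ _)]
      have : ∀ p : Fin N × Fin N,
          (∫ t in (0:ℝ)..(2*Real.pi),
            z p.1 * z p.2 * Real.cos ((((p.1:ℤ) - (p.2:ℤ) : ℤ):ℝ) * t))
          = if p.1 = p.2 then z p.1 * z p.2 * (2*Real.pi) else 0 := by
        intro p
        rw [intervalIntegral.integral_const_mul, cos_int_integral_aux]
        have hiff : ((p.1:ℤ) - (p.2:ℤ) = 0) ↔ p.1 = p.2 := by
          constructor
          · intro h; exact Fin.ext (by omega)
          · intro h; rw [h]; ring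
        by_cases h : p.1 = p.2
        · rw [if_pos (hiff.mpr h), if_pos h]
        · rw [if_neg (fun hc => h (hiff.mp hc)), if_neg h]; ring
      rw [Finset.sum_congr rfl fun p _ => this p]
      rw [Fintype.sum_prod_type]
      rw [Finset.mul_sum]
      refine Finset.sum_congr rfl fun j _ => ?_
      rw [Finset.sum_ite_eq univ j (fun l => z j * z l * (2*Real.pi))]
      simp [sq]
      ring
    -- integral of Φ * f
    have hint_Φf : ∫ t in (0:ℝ)..(2*Real.pi), Φ t * f t
        = 2*Real.pi * ∑ i, A.mulVec z i * z i := by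
      have hptw : ∀ t, Φ t * f t
          = ∑ p : Fin N × Fin N,
              z p.1 * z p.2 * (Φ t * Real.cos ((((p.1:ℤ) - (p.2:ℤ) : ℤ):ℝ) * t)) := by
        intro t
        rw [hexp t, Finset.mul_sum]
        exact Finset.sum_congr rfl fun p _ => by ring
      rw [intervalIntegral.integral_congr (g := fun t =>
        ∑ p : Fin N × Fin N,
          z p.1 * z p.2 * (Φ t * Real.cos ((((p.1:ℤ) - (p.2:ℤ) : ℤ):ℝ) * t)))
        (fun t _ => hptw t)]
      rw [intervalIntegral.integral_finset_sum (μ := MeasureTheory.volume)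
        (a := (0:ℝ)) (b := 2*Real.pi) (s := (Finset.univ : Finset (Fin N × Fin N)))
        (f := fun p t => z p.1 * z p.2 * (Φ t * Real.cos ((((p.1:ℤ) - (p.2:ℤ) : ℤ):ℝ) * t)))
        (fun p _ => Continuous.intervalIntegrable (by fun_prop) _ _)]
      have : ∀ p : Fin N × Fin N,
          (∫ t in (0:ℝ)..(2*Real.pi),
            z p.1 * z p.2 * (Φ t * Real.cos ((((p.1:ℤ) - (p.2:ℤ) : ℤ):ℝ) * t)))
          = z p.1 * z p.2 * (2*Real.pi * A p.1 p.2) := by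
        intro p
        rw [intervalIntegral.integral_const_mul, phi_cos_integral, hA p.1 p.2]
      rw [Finset.sum_congr rfl fun p _ => this p]
      have hrhs : ∑ i, A.mulVec z i * z i
          = ∑ p : Fin N × Fin N, A p.1 p.2 * z p.2 * z p.1 := by
        rw [Fintype.sum_prod_type]
        simp only [Matrix.mulVec, dotProduct, Finset.sum_mul]
      rw [hrhs, Finset.mul_sum]
      exact Finset.sum_congr rfl fun p _ => by ring
    -- monotonicity
    have hintf : IntervalIntegrable f MeasureTheory.volume 0 (2*Real.pi) :=
      hfc.intervalIntegrable _ _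
    have hintΦf : IntervalIntegrable (fun t => Φ t * f t) MeasureTheory.volume 0 (2*Real.pi) :=
      (hΦc.mul hfc).intervalIntegrable _ _
    have hle1 : ∫ t in (0:ℝ)..(2*Real.pi), m * f t ≤ ∫ t in (0:ℝ)..(2*Real.pi), Φ t * f t := by
      apply intervalIntegral.integral_mono_on (by positivity)
        ((continuous_const.mul hfc).intervalIntegrable _ _) hintΦf
      intro t _
      exact mul_le_mul_of_nonneg_right (hm.2 (Set.mem_range_self t)) (hf0 t)
    have hle2 : ∫ t in (0:ℝ)..(2*Real.pi), Φ t * f t ≤ ∫ t in (0:ℝ)..(2*Real.pi), M * f t := by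
      apply intervalIntegral.integral_mono_on (by positivity) hintΦf
        ((continuous_const.mul hfc).intervalIntegrable _ _)
      intro t _
      exact mul_le_mul_of_nonneg_right (hM.2 (Set.mem_range_self t)) (hf0 t)
    rw [intervalIntegral.integral_const_mul, hint_f, hint_Φf] at hle1
    rw [intervalIntegral.integral_const_mul, hint_f, hint_Φf] at hle2
    constructor
    · have : (2*Real.pi) * (m * ∑ i, (z i)^2) ≤ (2*Real.pi) * (∑ i, A.mulVec z i * z i) := by
        calc (2*Real.pi) * (m * ∑ i, (z i)^2) = m * (2*Real.pi * ∑ i, (z i)^2) := by ring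
        _ ≤ 2*Real.pi * ∑ i, A.mulVec z i * z i := hle1
      exact le_of_mul_le_mul_left this h2π
    · have : (2*Real.pi) * (∑ i, A.mulVec z i * z i) ≤ (2*Real.pi) * (M * ∑ i, (z i)^2) := by
        calc (2*Real.pi) * (∑ i, A.mulVec z i * z i) ≤ M * (2*Real.pi * ∑ i, (z i)^2) := hle2
        _ = (2*Real.pi) * (M * ∑ i, (z i)^2) := by ring
      exact le_of_mul_le_mul_left this h2π
  refine ⟨main, ?_⟩
  intro μ z hz heig
  obtain ⟨h1, h2⟩ := main z
  have hQ : ∑ i, A.mulVec z i * z i = μ * ∑ i, (z i)^2 := by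
    rw [heig, Finset.mul_sum]
    refine Finset.sum_congr rfl fun i _ => ?_
    simp [sq]
    ring
  rw [hQ] at h1 h2
  have hS : 0 < ∑ i, (z i)^2 := by
    obtain ⟨i, hi⟩ := Function.ne_iff.mp hz
    have hi' : z i ≠ 0 := by simpa using hi
    have h0 : 0 < (z i)^2 := by positivity
    have hle := Finset.single_le_sum (f := fun i => (z i)^2) (fun j _ => sq_nonneg _)
      (Finset.mem_univ i)
    have := lt_of_lt_of_le h0 hle
    simpa using this
  exact ⟨le_of_mul_le_mul_right (by linarith) hS, le_of_mul_le_mul_right (by linarith) hS⟩
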